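/- Let Ω ⊂ ℤ_p be a Borel set of positive Haar measure and T ⊂ ℤ_p a finite set with at least two elements such that (Ω, T) is a tiling pair of ℤ_p, and let γ_T := max_{t≠t′∈T} (−log_p |t − t′|_p). Then the Fourier transform of the indicator of Ω vanishes at high frequencies: 1̂_Ω(ξ) = 0 for all ξ ∈ ℚ_p with |ξ|_p > p^{γ_T + 1}. -/

import Mathlib

open MeasureTheory Complex

noncomputable section

namespace PadicTiling

variable (p : ℕ) [hp : Fact p.Prime]

instance : MeasurableSpace ℚ_[p] := borel _
instance : BorelSpace ℚ_[p] := ⟨rfl⟩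

/-- The closed unit ball of `ℚ_[p]` (the set `ℤ_p`) as a positive compact set. -/
def unitBall : TopologicalSpace.PositiveCompacts ℚ_[p] where
  carrier := Metric.closedBall 0 1
  isCompact' := isCompact_closedBall 0 1
  interior_nonempty' := ⟨0, mem_interior_iff_mem_nhds.mpr (Metric.closedBall_mem_nhds 0 one_pos)⟩

/-- The Haar measure on `ℚ_[p]` normalized so that `ℤ_p` has measure `1`. -/
def mHaar : Measure ℚ_[p] := Measure.addHaarMeasure (unitBall p)

/-- `ℤ_p` as a subset of `ℚ_[p]`. -/
def Zp : Set ℚ_[p] := {x : ℚ_[p] | ‖x‖ ≤ 1}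

/-- The fractional part `{x}` of a `p`-adic number: the rational number
`∑_{n=v}^{-1} a_n p^n` given by the negative-power part of the digit expansion. -/
def padicFract (x : ℚ_[p]) : ℚ :=
  ((PadicInt.toZModPow ((-x.valuation).toNat)
      (⟨x * (p : ℚ_[p]) ^ ((-x.valuation).toNat), by
        rcases eq_or_ne x 0 with hx | hx
        · simp [hx]
        · have hp1 : (1 : ℝ) < p := Nat.one_lt_cast.mpr hp.out.one_lt
          rw [norm_mul, Padic.norm_eq_zpow_neg_valuation hx, Padic.norm_p_pow,
            ← zpow_add₀ (by positivity : (p : ℝ) ≠ 0)]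
          apply zpow_le_one_of_nonpos₀ (le_of_lt hp1) (by omega)
          ⟩ : ℤ_[p])).val : ℚ) / (p : ℚ) ^ ((-x.valuation).toNat)

/-- The standard additive character `χ(x) = e^{2πi {x}}` of `ℚ_[p]`. -/
def padicChar (x : ℚ_[p]) : ℂ :=
  Complex.exp (2 * Real.pi * Complex.I * (padicFract p x : ℂ))


/-- `γ_T := max_{t ≠ t' ∈ T} (-log_p |t - t'|_p)`, the largest valuation of a difference of
two distinct elements of `T`. -/
def gammaT (T : Finset ℤ_[p]) (hT : 1 < T.card) : ℤ :=
  letI := Classical.decEq ℤ_[p]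
  T.offDiag.sup'
    (Finset.card_pos.mp (by
      rw [Finset.offDiag_card]
      have h2 : 2 * T.card ≤ T.card * T.card := Nat.mul_le_mul_right _ hT
      omega))
    fun tt => ((tt.1 - tt.2 : ℤ_[p]) : ℚ_[p]).valuation

/-! ### Auxiliary material: the rational exponential `e(q) = exp(2πiq)` -/

/-- `eRat q = exp(2πi q)` for rational `q`. -/
def eRat (q : ℚ) : ℂ := Complex.exp (2 * Real.pi * Complex.I * q)

lemma eRat_add (q q' : ℚ) : eRat (q + q') = eRat q * eRat q' := by
  rw [eRat, eRat, eRat, ← Complex.exp_add]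
  push_cast
  ring_nf

lemma eRat_intCast (n : ℤ) : eRat (n : ℚ) = 1 := by
  rw [eRat]
  have : 2 * Real.pi * Complex.I * ((n : ℚ) : ℂ) = (n : ℤ) * (2 * Real.pi * Complex.I) := by
    push_cast; ring
  rw [this, Complex.exp_int_mul_two_pi_mul_I]

lemma eRat_eq_of_sub_int (q q' : ℚ) (h : ∃ n : ℤ, q - q' = n) : eRat q = eRat q' := by
  obtain ⟨n, hn⟩ := h
  have : q = q' + (n : ℚ) := by linarith [hn]
  rw [this, eRat_add, eRat_intCast, mul_one]

lemma eRat_eq_iff (q q' : ℚ) : eRat q = eRat q' ↔ ∃ n : ℤ, q - q' = n := by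
  constructor
  · intro h
    rw [eRat, eRat, Complex.exp_eq_exp_iff_exists_int] at h
    obtain ⟨n, hn⟩ := h
    refine ⟨n, ?_⟩
    have h2 : (2 * Real.pi * Complex.I) * (q - q' : ℚ) = (2 * Real.pi * Complex.I) * n := by
      push_cast at hn ⊢
      ring_nf at hn ⊢
      linear_combination hn
    have hne : (2 * Real.pi * Complex.I) ≠ 0 := by
      simp [Real.pi_ne_zero, Complex.I_ne_zero]
    have h3 : ((q - q' : ℚ) : ℂ) = (n : ℂ) := mul_left_cancel₀ hne h2
    exact_mod_cast h3
  · exact eRat_eq_of_sub_int _ _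

lemma eRat_zero : eRat 0 = 1 := by
  have : ((0:ℚ):ℂ) = 0 := by norm_num
  rw [eRat, this, mul_zero, Complex.exp_zero]

lemma eRat_pow (q : ℚ) (n : ℕ) : eRat q ^ n = eRat (n * q) := by
  rw [eRat, eRat, ← Complex.exp_nat_mul]
  congr 1
  push_cast
  ring

/-! ### Auxiliary material: p-adic approximation lemmas -/

lemma norm_p_pow_nat (k : ℕ) : ‖(p : ℚ_[p]) ^ k‖ = (p : ℝ) ^ (-(k:ℤ)) :=
  Padic.norm_p_pow k

lemma p_pow_ne_zero' (M : ℕ) : ((p : ℚ_[p]) ^ M) ≠ 0 :=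
  pow_ne_zero _ (Nat.cast_ne_zero.mpr hp.out.ne_zero)

/-- approximation of a `p`-adic integer by `toZModPow`. -/
lemma norm_sub_toZModPow (z : ℤ_[p]) (n : ℕ) :
    ‖(z : ℚ_[p]) - (((PadicInt.toZModPow n z).val : ℕ) : ℚ_[p])‖ ≤ (p : ℝ) ^ (-(n:ℤ)) := by
  haveI : NeZero (p ^ n) := ⟨pow_ne_zero _ hp.out.ne_zero⟩
  have hval : (PadicInt.toZModPow n z).val = z.appr n % p ^ n := by
    have : PadicInt.toZModPow n z = ((z.appr n : ℕ) : ZMod (p ^ n)) := rfl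
    rw [this, ZMod.val_natCast]
  have hmem : z - (((PadicInt.toZModPow n z).val : ℕ) : ℤ_[p]) ∈
      (Ideal.span {(p : ℤ_[p]) ^ n} : Ideal ℤ_[p]) := by
    have h1 := z.appr_spec n
    have h2 : ((z.appr n : ℤ_[p])) - (((PadicInt.toZModPow n z).val : ℕ) : ℤ_[p]) ∈
        (Ideal.span {(p : ℤ_[p]) ^ n} : Ideal ℤ_[p]) := by
      rw [Ideal.mem_span_singleton, hval]
      refine ⟨(z.appr n / p ^ n : ℕ), ?_⟩
      have hd : p ^ n * (z.appr n / p ^ n) + z.appr n % p ^ n = z.appr n :=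
        Nat.div_add_mod _ _
      have : ((p ^ n * (z.appr n / p ^ n) + z.appr n % p ^ n : ℕ) : ℤ_[p])
          = ((z.appr n : ℕ) : ℤ_[p]) := by rw [hd]
      push_cast at this
      linear_combination -this
    have := Ideal.add_mem _ h1 h2
    simpa using this
  have hnorm : ‖z - (((PadicInt.toZModPow n z).val : ℕ) : ℤ_[p])‖ ≤ (p:ℝ) ^ (-(n:ℤ)) :=
    (PadicInt.norm_le_pow_iff_mem_span_pow _ n).mpr hmem
  calc ‖(z : ℚ_[p]) - (((PadicInt.toZModPow n z).val : ℕ) : ℚ_[p])‖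
      = ‖z - (((PadicInt.toZModPow n z).val : ℕ) : ℤ_[p])‖ := by
        rw [PadicInt.norm_def]; push_cast; ring_nf
    _ ≤ _ := hnorm

lemma div_norm_le (y : ℚ_[p]) (a : ℕ) (M : ℕ)
    (h : ‖y * (p:ℚ_[p])^M - (a:ℚ_[p])‖ ≤ (p:ℝ)^(-(M:ℤ))) :
    ‖y - (a:ℚ_[p])/(p:ℚ_[p])^M‖ ≤ 1 := by
  have hne := p_pow_ne_zero' p M
  have heq : y - (a:ℚ_[p])/(p:ℚ_[p])^M = (y * (p:ℚ_[p])^M - (a:ℚ_[p])) / (p:ℚ_[p])^M := by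
    field_simp
  rw [heq, norm_div, norm_p_pow_nat]
  have hpos : (0:ℝ) < (p:ℝ) ^ (-(M:ℤ)) := by
    apply zpow_pos
    exact_mod_cast hp.out.pos
  rw [div_le_one hpos]
  exact h

lemma rat_int_of_padic (a b : ℤ) (k M : ℕ)
    (h : ‖(a:ℚ_[p])/(p:ℚ_[p])^k - (b:ℚ_[p])/(p:ℚ_[p])^M‖ ≤ 1) :
    ∃ n : ℤ, (a:ℚ)/(p:ℚ)^k - (b:ℚ)/(p:ℚ)^M = n := by
  have hne : ((p:ℚ_[p]) ≠ 0) := Nat.cast_ne_zero.mpr hp.out.ne_zero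
  set N : ℤ := a * p^M - b * p^k with hN
  have heq : (a:ℚ_[p])/(p:ℚ_[p])^k - (b:ℚ_[p])/(p:ℚ_[p])^M
      = (N:ℚ_[p]) / (p:ℚ_[p])^(k+M) := by
    rw [hN]; push_cast; field_simp; ring
  have hnorm : ‖(N : ℚ_[p])‖ ≤ (p:ℝ) ^ (-((k+M : ℕ)):ℤ) := by
    have h2 : ‖(N:ℚ_[p]) / (p:ℚ_[p])^(k+M)‖ ≤ 1 := by rw [← heq]; exact h
    rw [norm_div, norm_p_pow_nat,
      div_le_one (zpow_pos (by exact_mod_cast hp.out.pos) _)] at h2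
    simpa using h2
  obtain ⟨n, hn⟩ := (Padic.norm_int_le_pow_iff_dvd N (k+M)).mp hnorm
  refine ⟨n, ?_⟩
  have hpq : ((p:ℚ)) ≠ 0 := Nat.cast_ne_zero.mpr hp.out.ne_zero
  have hQ : (N : ℚ) = (p:ℚ)^(k+M) * n := by exact_mod_cast congrArg (Int.cast : ℤ → ℚ) hn
  rw [hN] at hQ
  push_cast at hQ
  field_simp
  linear_combination hQ

lemma padicFract_approx (x : ℚ_[p]) :
    ∃ a k : ℕ, padicFract p x = (a:ℚ)/(p:ℚ)^k ∧ a < p ^ k ∧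
      ‖x - (a : ℚ_[p])/(p:ℚ_[p])^k‖ ≤ 1 := by
  haveI : NeZero (p ^ (-x.valuation).toNat) := ⟨pow_ne_zero _ hp.out.ne_zero⟩
  refine ⟨_, (-x.valuation).toNat, rfl, ZMod.val_lt _, ?_⟩
  apply div_norm_le
  exact norm_sub_toZModPow p _ _

lemma exists_fract_approx (y : ℚ_[p]) (M : ℕ) (hy : ‖y‖ ≤ (p:ℝ)^(M:ℤ)) :
    ∃ r : ℕ, r < p ^ M ∧ ‖y - (r:ℚ_[p])/(p:ℚ_[p])^M‖ ≤ 1 := by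
  haveI : NeZero (p ^ M) := ⟨pow_ne_zero _ hp.out.ne_zero⟩
  have hppos : (0:ℝ) < p := by exact_mod_cast hp.out.pos
  have hz : ‖y * (p:ℚ_[p])^M‖ ≤ 1 := by
    rw [norm_mul, norm_p_pow_nat]
    calc ‖y‖ * (p:ℝ)^(-(M:ℤ)) ≤ (p:ℝ)^(M:ℤ) * (p:ℝ)^(-(M:ℤ)) :=
          mul_le_mul_of_nonneg_right hy (zpow_nonneg hppos.le _)
      _ = 1 := by rw [← zpow_add₀ (ne_of_gt hppos)]; simp
  refine ⟨(PadicInt.toZModPow M (⟨y * (p:ℚ_[p])^M, hz⟩ : ℤ_[p])).val, ZMod.val_lt _, ?_⟩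
  apply div_norm_le
  exact norm_sub_toZModPow p _ M

/-! ### The character `ψ(x) = exp(-2πi {x})` -/

def psi (x : ℚ_[p]) : ℂ :=
  Complex.exp (-(2 * Real.pi * Complex.I * ((padicFract p x : ℚ) : ℂ)))

lemma psi_eq_eRat (x : ℚ_[p]) : psi p x = eRat (-(padicFract p x)) := by
  rw [psi, eRat]
  push_cast
  ring_nf

lemma psi_eq_of_approx (x : ℚ_[p]) (b : ℤ) (M : ℕ)
    (h : ‖x - (b:ℚ_[p])/(p:ℚ_[p])^M‖ ≤ 1) :
    psi p x = eRat (-((b:ℚ)/(p:ℚ)^M)) := by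
  obtain ⟨a, k, hfr, -, ha⟩ := padicFract_approx p x
  rw [psi_eq_eRat, hfr]
  apply eRat_eq_of_sub_int
  obtain ⟨n, hn⟩ := rat_int_of_padic p b a M k (by
    push_cast
    have h1 : (b:ℚ_[p])/(p:ℚ_[p])^M - (a:ℚ_[p])/(p:ℚ_[p])^k
        = (x - (a:ℚ_[p])/(p:ℚ_[p])^k) + -(x - (b:ℚ_[p])/(p:ℚ_[p])^M) := by ring
    rw [h1]
    refine le_trans (Padic.nonarchimedean _ _) (max_le ha ?_)
    rw [norm_neg]; exact h)
  exact ⟨n, by push_cast at hn ⊢; linarith⟩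

lemma psi_add (x y : ℚ_[p]) : psi p (x + y) = psi p x * psi p y := by
  obtain ⟨a, k, hfa, -, ha⟩ := padicFract_approx p x
  obtain ⟨b, l, hfb, -, hb⟩ := padicFract_approx p y
  have happrox : ‖(x + y) - ((a * p^l + b * p^k : ℕ):ℚ_[p])/(p:ℚ_[p])^(k+l)‖ ≤ 1 := by
    have hpne : ((p:ℚ_[p])) ≠ 0 := Nat.cast_ne_zero.mpr hp.out.ne_zero
    have heq : (a:ℚ_[p])/(p:ℚ_[p])^k + (b:ℚ_[p])/(p:ℚ_[p])^l
        = ((a * p^l + b * p^k : ℕ):ℚ_[p])/(p:ℚ_[p])^(k+l) := by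
      rw [div_add_div _ _ (pow_ne_zero k hpne) (pow_ne_zero l hpne), pow_add]
      push_cast; ring
    rw [← heq]
    have h1 : (x + y) - ((a:ℚ_[p])/(p:ℚ_[p])^k + (b:ℚ_[p])/(p:ℚ_[p])^l)
        = (x - (a:ℚ_[p])/(p:ℚ_[p])^k) + (y - (b:ℚ_[p])/(p:ℚ_[p])^l) := by ring
    rw [h1]
    calc ‖_ + _‖ ≤ max ‖x - (a:ℚ_[p])/(p:ℚ_[p])^k‖ ‖y - (b:ℚ_[p])/(p:ℚ_[p])^l‖ :=
          Padic.nonarchimedean _ _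
      _ ≤ 1 := max_le ha hb
  have h2 := psi_eq_of_approx p (x+y) ((a * p^l + b * p^k : ℕ) : ℤ) (k+l)
    (by push_cast; push_cast at happrox; exact happrox)
  have h3 := psi_eq_of_approx p x (a : ℤ) k (by push_cast; exact ha)
  have h4 := psi_eq_of_approx p y (b : ℤ) l (by push_cast; exact hb)
  rw [h2, h3, h4, ← eRat_add]
  congr 1
  have hpq : ((p:ℚ)) ≠ 0 := Nat.cast_ne_zero.mpr hp.out.ne_zero
  push_cast
  field_simp
  ring

lemma psi_one_of_norm_le (x : ℚ_[p]) (h : ‖x‖ ≤ 1) : psi p x = 1 := by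
  have h0 : ‖x - ((0:ℤ):ℚ_[p])/(p:ℚ_[p])^0‖ ≤ 1 := by simpa using h
  rw [psi_eq_of_approx p x 0 0 h0]
  have heq : (-(((0:ℤ):ℚ)/(p:ℚ)^0)) = (0:ℚ) := by norm_num
  rw [heq, eRat_zero]

lemma psi_norm (x : ℚ_[p]) : ‖psi p x‖ = 1 := by
  rw [psi, Complex.norm_exp]
  have : (-(2 * Real.pi * Complex.I * ((padicFract p x : ℚ) : ℂ))).re = 0 := by
    simp [Complex.mul_re, Complex.mul_im]
  rw [this, Real.exp_zero]

lemma psi_p_inv : psi p ((p:ℚ_[p])⁻¹) ≠ 1 := by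
  have happ : ‖(p:ℚ_[p])⁻¹ - ((1:ℤ):ℚ_[p])/(p:ℚ_[p])^1‖ ≤ 1 := by
    have heq : ((1:ℤ):ℚ_[p])/(p:ℚ_[p])^1 = (p:ℚ_[p])⁻¹ := by
      push_cast; rw [pow_one, one_div]
    rw [heq, sub_self, norm_zero]
    exact zero_le_one
  rw [psi_eq_of_approx p _ 1 1 happ]
  intro hone
  have h1 : eRat (-(((1:ℤ):ℚ)/(p:ℚ)^1)) = eRat 0 := by rw [hone, eRat_zero]
  rw [eRat_eq_iff] at h1
  obtain ⟨n, hn⟩ := h1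
  have hpq : ((p:ℚ)) ≠ 0 := Nat.cast_ne_zero.mpr hp.out.ne_zero
  have hZ : (n:ℚ) * p = -1 := by
    push_cast at hn
    field_simp at hn
    linarith
  have hZ' : n * (p:ℤ) = -1 := by exact_mod_cast hZ
  have hunit : IsUnit ((p:ℤ)) := IsUnit.of_mul_eq_one (-n) (by linarith [hZ'])
  rcases Int.isUnit_iff.mp hunit with h | h
  all_goals
    have := hp.out.two_le
    omega

lemma continuous_psi_mul (ξ : ℚ_[p]) : Continuous (fun x => psi p (ξ * x)) := by
  rcases eq_or_ne ξ 0 with rfl | hξ0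
  · have heq : (fun x : ℚ_[p] => psi p (0 * x)) = fun _ => psi p 0 := by
      funext x; rw [zero_mul]
    rw [heq]
    exact continuous_const
  · rw [continuous_iff_continuousAt]
    intro x₀
    have hev : (fun x => psi p (ξ * x)) =ᶠ[nhds x₀] fun _ => psi p (ξ * x₀) := by
      have hr : (0:ℝ) < ‖ξ‖⁻¹ := by
        rw [inv_pos]
        exact norm_pos_iff.mpr hξ0
      filter_upwards [Metric.ball_mem_nhds x₀ hr] with x hx
      have hd : ‖x - x₀‖ < ‖ξ‖⁻¹ := by rwa [Metric.mem_ball, dist_eq_norm] at hx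
      have h1 : ‖ξ * (x - x₀)‖ ≤ 1 := by
        rw [norm_mul]
        calc ‖ξ‖ * ‖x - x₀‖ ≤ ‖ξ‖ * ‖ξ‖⁻¹ :=
              mul_le_mul_of_nonneg_left hd.le (norm_nonneg _)
          _ = 1 := mul_inv_cancel₀ (norm_ne_zero_iff.mpr hξ0)
      calc psi p (ξ * x) = psi p (ξ * x₀ + ξ * (x - x₀)) := by congr 1; ring
        _ = psi p (ξ * x₀) * psi p (ξ * (x - x₀)) := psi_add p _ _
        _ = psi p (ξ * x₀) := by rw [psi_one_of_norm_le p _ h1, mul_one]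
    exact hev.continuousAt

/-! ### Measure theory on `ℤ_p` -/

lemma Zp_eq : Zp p = Metric.closedBall 0 1 := by
  ext x
  simp [Zp, Metric.mem_closedBall, dist_eq_norm]

lemma Zp_measurable : MeasurableSet (Zp p) := by
  rw [Zp_eq]
  exact Metric.isClosed_closedBall.measurableSet

instance : (mHaar p).IsAddHaarMeasure := by
  unfold mHaar
  infer_instance

lemma mHaar_Zp : mHaar p (Zp p) = 1 := by
  rw [Zp_eq, mHaar]
  exact Measure.addHaarMeasure_self (K₀ := unitBall p)

lemma mem_Zp_add_iff (h x : ℚ_[p]) (hh : ‖h‖ ≤ 1) : x + h ∈ Zp p ↔ x ∈ Zp p := by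
  constructor
  · intro hx
    have heq : x = (x + h) + (-h) := by ring
    rw [Zp, Set.mem_setOf_eq, heq]
    refine le_trans (Padic.nonarchimedean _ _) (max_le hx ?_)
    rwa [norm_neg]
  · intro hx
    exact le_trans (Padic.nonarchimedean _ _) (max_le hx hh)

lemma setIntegral_translate (f : ℚ_[p] → ℂ) (h : ℚ_[p]) (hh : ‖h‖ ≤ 1) :
    ∫ x in Zp p, f (x + h) ∂ mHaar p = ∫ x in Zp p, f x ∂ mHaar p := by
  rw [← integral_indicator (Zp_measurable p), ← integral_indicator (Zp_measurable p)]
  have key : ∀ x, (Zp p).indicator (fun x => f (x + h)) x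
      = (Zp p).indicator f (x + h) := by
    intro x
    by_cases hx : x ∈ Zp p
    · rw [Set.indicator_of_mem hx, Set.indicator_of_mem (by rwa [mem_Zp_add_iff p h x hh])]
    · rw [Set.indicator_of_notMem hx,
        Set.indicator_of_notMem (fun hc => hx ((mem_Zp_add_iff p h x hh).mp hc))]
  rw [show ((Zp p).indicator (fun x => f (x + h))) = fun x => (Zp p).indicator f (x + h) from
    funext key]
  exact integral_add_right_eq_self ((Zp p).indicator f) h

lemma integral_psi_zero (ξ : ℚ_[p]) (hξ : 1 < ‖ξ‖) :
    ∫ x in Zp p, psi p (ξ * x) ∂ mHaar p = 0 := by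
  have hξ0 : ξ ≠ 0 := by
    intro h; rw [h, norm_zero] at hξ; linarith
  have hp0 : ((p:ℚ_[p])) ≠ 0 := Nat.cast_ne_zero.mpr hp.out.ne_zero
  set h : ℚ_[p] := ξ⁻¹ * (p:ℚ_[p])⁻¹ with hh_def
  have hnormp : ‖(p:ℚ_[p])‖ = (p:ℝ)⁻¹ := Padic.norm_p
  have hple : ((p:ℝ))⁻¹ < 1 := by
    rw [inv_lt_one_iff₀]
    right
    exact_mod_cast hp.out.one_lt
  have hp1 : (1:ℝ) < p := by exact_mod_cast hp.out.one_lt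
  have hnp : (p:ℝ) ≤ ‖ξ‖ := by
    have hv : ‖ξ‖ = (p:ℝ) ^ (-ξ.valuation) := Padic.norm_eq_zpow_neg_valuation hξ0
    have hv1 : 1 ≤ -ξ.valuation := by
      by_contra hcon
      push_neg at hcon
      have : ‖ξ‖ ≤ 1 := by
        rw [hv]
        exact zpow_le_one_of_nonpos₀ hp1.le (by omega)
      linarith
    calc (p:ℝ) = (p:ℝ) ^ (1:ℤ) := (zpow_one _).symm
      _ ≤ (p:ℝ) ^ (-ξ.valuation) := zpow_le_zpow_right₀ hp1.le hv1
      _ = ‖ξ‖ := hv.symm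
  have hh : ‖h‖ ≤ 1 := by
    rw [hh_def, norm_mul, norm_inv, norm_inv, hnormp, inv_inv]
    rw [show (1:ℝ) = ‖ξ‖⁻¹ * ‖ξ‖ by rw [inv_mul_cancel₀ (by positivity : ‖ξ‖ ≠ 0)]]
    apply mul_le_mul_of_nonneg_left hnp (inv_nonneg.mpr (norm_nonneg _))
  have hxih : ξ * h = (p:ℚ_[p])⁻¹ := by
    rw [hh_def, ← mul_assoc, mul_inv_cancel₀ hξ0, one_mul]
  have key := setIntegral_translate p (fun x => psi p (ξ * x)) h hh
  have key2 : ∀ x : ℚ_[p], psi p (ξ * (x + h)) = psi p (ξ * x) * psi p ((p:ℚ_[p])⁻¹) := by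
    intro x
    rw [show ξ * (x + h) = ξ * x + ξ * h by ring, psi_add, hxih]
  rw [funext fun x => key2 x] at key
  have key3 : ∫ x in Zp p, psi p (ξ * x) * psi p ((p:ℚ_[p])⁻¹) ∂ mHaar p
      = psi p ((p:ℚ_[p])⁻¹) * ∫ x in Zp p, psi p (ξ * x) ∂ mHaar p := by
    rw [show (fun x => psi p (ξ * x) * psi p ((p:ℚ_[p])⁻¹))
        = fun x => psi p ((p:ℚ_[p])⁻¹) • psi p (ξ * x) from funext fun x => by
          rw [smul_eq_mul]; ring]
    exact integral_smul _ _
  rw [key3] at key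
  have h0 : (psi p ((p:ℚ_[p])⁻¹) - 1) * (∫ x in Zp p, psi p (ξ * x) ∂ mHaar p) = 0 := by
    linear_combination key
  rcases mul_eq_zero.mp h0 with h1 | h1
  · exact absurd (by linear_combination h1) (psi_p_inv p)
  · exact h1

/-! ### The tiling Fourier identity -/

lemma indicator_term_measurable (Ω : Set ℚ_[p]) (hmeas : MeasurableSet Ω) (t : ℤ_[p])
    (ξ : ℚ_[p]) :
    Measurable (fun x : ℚ_[p] =>
      (Ω.indicator (fun _ => (1:ℝ)) (x - (t:ℚ_[p]))) • psi p (ξ * x)) := by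
  refine Measurable.smul (f := fun x : ℚ_[p] => Ω.indicator (fun _ => (1:ℝ)) (x - (t:ℚ_[p])))
    (g := fun x => psi p (ξ * x)) ?_ ?_
  · have hsub : Measurable (fun x : ℚ_[p] => x - (t:ℚ_[p])) :=
      (continuous_id.sub continuous_const).measurable
    exact (measurable_const.indicator hmeas).comp hsub
  · exact (continuous_psi_mul p ξ).measurable

lemma term_integrable (Ω : Set ℚ_[p]) (hmeas : MeasurableSet Ω) (t : ℤ_[p]) (ξ : ℚ_[p]) :
    Integrable (fun x : ℚ_[p] => (Ω.indicator (fun _ => (1:ℝ)) (x - (t:ℚ_[p]))) • psi p (ξ * x))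
      ((mHaar p).restrict (Zp p)) := by
  haveI : IsFiniteMeasure ((mHaar p).restrict (Zp p)) := by
    constructor
    rw [Measure.restrict_apply_univ, mHaar_Zp]
    exact ENNReal.one_lt_top
  apply Integrable.mono' (integrable_const (1:ℝ))
  · exact ((indicator_term_measurable p Ω hmeas t ξ)).aestronglyMeasurable
  · apply Filter.Eventually.of_forall
    intro x
    rw [norm_smul, psi_norm, mul_one]
    by_cases hx : x - (t:ℚ_[p]) ∈ Ω
    · rw [Set.indicator_of_mem hx]; simp
    · rw [Set.indicator_of_notMem hx]; simp

lemma term_eval (Ω : Set ℚ_[p]) (hΩ : Ω ⊆ Zp p) (hmeas : MeasurableSet Ω) (t : ℤ_[p])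
    (ξ : ℚ_[p]) :
    ∫ x in Zp p, (Ω.indicator (fun _ => (1:ℝ)) (x - (t:ℚ_[p]))) • psi p (ξ * x) ∂ mHaar p
      = psi p (ξ * (t:ℚ_[p])) * ∫ x in Ω, psi p (ξ * x) ∂ mHaar p := by
  set F : ℚ_[p] → ℂ := fun x => (Ω.indicator (fun _ => (1:ℝ)) (x - (t:ℚ_[p]))) • psi p (ξ * x)
    with hF
  have hvanish : ∀ x ∉ Zp p, F x = 0 := by
    intro x hx
    rw [hF]
    have hxt : x - (t:ℚ_[p]) ∉ Ω := by
      intro hc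
      apply hx
      have h1 : ‖x - (t:ℚ_[p])‖ ≤ 1 := hΩ hc
      have h2 : ‖(t:ℚ_[p])‖ ≤ 1 := t.2
      have heq : x = (x - (t:ℚ_[p])) + (t:ℚ_[p]) := by ring
      rw [Zp, Set.mem_setOf_eq, heq]
      exact le_trans (Padic.nonarchimedean _ _) (max_le h1 h2)
    simp [Set.indicator_of_notMem hxt]
  have step1 : ∫ x in Zp p, F x ∂ mHaar p = ∫ x, F x ∂ mHaar p :=
    setIntegral_eq_integral_of_forall_compl_eq_zero hvanish
  have step2 : ∫ x, F x ∂ mHaar p = ∫ x, F (x + (t:ℚ_[p])) ∂ mHaar p :=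
    (integral_add_right_eq_self F ((t:ℚ_[p]))).symm
  have step3 : ∀ y, F (y + (t:ℚ_[p]))
      = psi p (ξ * (t:ℚ_[p])) * (Ω.indicator (fun y => psi p (ξ * y)) y) := by
    intro y
    rw [hF]
    simp only [add_sub_cancel_right]
    rw [show ξ * (y + (t:ℚ_[p])) = ξ * y + ξ * (t:ℚ_[p]) by ring, psi_add]
    by_cases hy : y ∈ Ω
    · rw [Set.indicator_of_mem hy, Set.indicator_of_mem hy]
      rw [Complex.real_smul]
      push_cast
      ring
    · rw [Set.indicator_of_notMem hy, Set.indicator_of_notMem hy]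
      simp
  rw [step1, step2, funext step3, integral_const_mul, integral_indicator hmeas]

lemma tiling_fourier (Ω : Set ℚ_[p]) (hΩ : Ω ⊆ Zp p) (hmeas : MeasurableSet Ω)
    (T : Finset ℤ_[p])
    (htile : ∀ᵐ x ∂ (mHaar p).restrict (Zp p),
      ∑ t ∈ T, Ω.indicator (fun _ => (1 : ℝ)) (x - (t : ℚ_[p])) = 1)
    (ξ : ℚ_[p]) (hξ : 1 < ‖ξ‖) :
    (∑ t ∈ T, psi p (ξ * (t:ℚ_[p]))) * (∫ x in Ω, psi p (ξ * x) ∂ mHaar p) = 0 := by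
  have key : ∫ x in Zp p, (∑ t ∈ T, Ω.indicator (fun _ => (1:ℝ)) (x - (t:ℚ_[p]))) • psi p (ξ * x)
      ∂ mHaar p = 0 := by
    rw [← integral_psi_zero p ξ hξ]
    apply integral_congr_ae
    filter_upwards [htile] with x hx
    rw [hx, one_smul]
  have expand : ∀ x : ℚ_[p],
      (∑ t ∈ T, Ω.indicator (fun _ => (1:ℝ)) (x - (t:ℚ_[p]))) • psi p (ξ * x)
        = ∑ t ∈ T, (Ω.indicator (fun _ => (1:ℝ)) (x - (t:ℚ_[p]))) • psi p (ξ * x) := by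
    intro x
    rw [Finset.sum_smul]
  rw [funext expand] at key
  rw [integral_finset_sum T (fun t _ => term_integrable p Ω hmeas t ξ)] at key
  calc (∑ t ∈ T, psi p (ξ * (t:ℚ_[p]))) * (∫ x in Ω, psi p (ξ * x) ∂ mHaar p)
      = ∑ t ∈ T, psi p (ξ * (t:ℚ_[p])) * (∫ x in Ω, psi p (ξ * x) ∂ mHaar p) := by
        rw [Finset.sum_mul]
    _ = ∑ t ∈ T, ∫ x in Zp p,
          (Ω.indicator (fun _ => (1:ℝ)) (x - (t:ℚ_[p]))) • psi p (ξ * x) ∂ mHaar p := by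
        exact Finset.sum_congr rfl fun t _ => (term_eval p Ω hΩ hmeas t ξ).symm
    _ = 0 := key

/-! ### Vanishing sums of roots of unity -/

lemma roots_of_unity_lemma {M : ℕ} (hM : 1 ≤ M) {ζ : ℂ} (hζ : IsPrimitiveRoot ζ (p ^ M))
    {α : Type*} {T : Finset α} (b : α → ℕ) (hb : ∀ t ∈ T, b t < p ^ M)
    (hne : T.Nonempty) (hsum : ∑ t ∈ T, ζ ^ (b t) = 0) :
    ∃ t ∈ T, ∃ t' ∈ T, ∃ d : ℤ, d ≠ 0 ∧ ¬ (p:ℤ) ∣ d ∧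
      (b t : ℤ) - (b t' : ℤ) = d * (p:ℤ) ^ (M - 1) := by
  classical
  set M' := M - 1 with hM'
  have hMM : M = M' + 1 := (Nat.succ_pred_eq_of_pos hM).symm
  have hppos : 0 < p := hp.out.pos
  have hp2 : 2 ≤ p := hp.out.two_le
  have hpM'pos : 0 < p ^ M' := Nat.pow_pos hppos
  have hpMpos : 0 < p ^ M := Nat.pow_pos hppos
  set P : Polynomial ℚ := ∑ t ∈ T, Polynomial.X ^ (b t) with hP
  have hcoeff : ∀ j, P.coeff j = ((T.filter (fun t => b t = j)).card : ℚ) := by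
    intro j
    rw [hP, Polynomial.finset_sum_coeff]
    simp only [Polynomial.coeff_X_pow]
    rw [Finset.sum_boole]
    congr 1
    apply congrArg Finset.card
    apply Finset.filter_congr
    intro t _
    simp [eq_comm]
  have haev : Polynomial.aeval ζ P = 0 := by
    rw [hP, map_sum]
    simpa using hsum
  have hdvd : Polynomial.cyclotomic (p ^ M) ℚ ∣ P := by
    rw [Polynomial.cyclotomic_eq_minpoly_rat hζ hpMpos]
    exact minpoly.dvd ℚ ζ haev
  obtain ⟨Q, hPQ⟩ := hdvd
  obtain ⟨t₀, ht₀⟩ := hne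
  have hc0 : ∀ j, 0 < (T.filter (fun t => b t = j)).card → P.coeff j ≠ 0 := by
    intro j hj
    rw [hcoeff]
    have : (0:ℚ) < ((T.filter (fun t => b t = j)).card : ℚ) := by exact_mod_cast hj
    exact this.ne'
  have hPne : P ≠ 0 := by
    intro h0
    have : P.coeff (b t₀) ≠ 0 := hc0 _ (Finset.card_pos.mpr ⟨t₀, Finset.mem_filter.mpr ⟨ht₀, rfl⟩⟩)
    rw [h0] at this; simp at this
  have hQne : Q ≠ 0 := by
    intro h0; rw [h0, mul_zero] at hPQ; exact hPne hPQ
  have hΦne : Polynomial.cyclotomic (p ^ M) ℚ ≠ 0 := Polynomial.cyclotomic_ne_zero _ ℚ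
  have hdegP : P.natDegree ≤ p ^ M - 1 := by
    apply Polynomial.natDegree_sum_le_of_forall_le
    intro t ht
    rw [Polynomial.natDegree_X_pow]
    have := hb t ht
    omega
  have hdegΦ : (Polynomial.cyclotomic (p ^ M) ℚ).natDegree = p ^ M - p ^ M' := by
    rw [Polynomial.natDegree_cyclotomic, hMM, Nat.totient_prime_pow hp.out (Nat.succ_pos _)]
    have h1 : p ^ (M' + 1) = p ^ M' * p := pow_succ p M'
    have h2 : p ^ M' * (p - 1) = p ^ M' * p - p ^ M' := by
      cases p with
      | zero => omega
      | succ q => rw [Nat.succ_sub_one, Nat.mul_succ]; omega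
    simp only [Nat.succ_sub_one]
    rw [h2, ← h1]
  have hdegQ : Q.natDegree ≤ p ^ M' - 1 := by
    have hmul := Polynomial.natDegree_mul hΦne hQne
    rw [← hPQ] at hmul
    have hle : p ^ M' ≤ p ^ M := Nat.pow_le_pow_right hppos (by omega)
    omega
  have hQcoeff0 : ∀ j, p ^ M' ≤ j → Q.coeff j = 0 := by
    intro j hj
    apply Polynomial.coeff_eq_zero_of_natDegree_lt
    omega
  have hkey : ∀ r s : ℕ, r < p ^ M' → s < p → P.coeff (r + s * p ^ M') = Q.coeff r := by
    intro r s hr hs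
    have hΦ : Polynomial.cyclotomic (p ^ M) ℚ
        = ∑ i ∈ Finset.range p, (Polynomial.X ^ p ^ M') ^ i := by
      rw [hMM]; exact Polynomial.cyclotomic_prime_pow_eq_geom_sum hp.out
    rw [hPQ, hΦ, Finset.sum_mul, Polynomial.finset_sum_coeff]
    have hterm : ∀ i ∈ Finset.range p,
        ((Polynomial.X ^ p ^ M') ^ i * Q).coeff (r + s * p ^ M')
          = if i = s then Q.coeff r else 0 := by
      intro i hi
      rw [Finset.mem_range] at hi
      rw [← pow_mul, mul_comm ((Polynomial.X : Polynomial ℚ) ^ (p ^ M' * i)) Q,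
        Polynomial.coeff_mul_X_pow']
      rcases lt_trichotomy i s with h | h | h
      · have h1 : p ^ M' * i ≤ r + s * p ^ M' := by nlinarith
        rw [if_pos h1, if_neg (by omega)]
        apply hQcoeff0
        have e1 : p ^ M' * (i + 1) = p ^ M' * i + p ^ M' := by ring
        have e2 : s * p ^ M' = p ^ M' * s := by ring
        have h3 : p ^ M' * (i + 1) ≤ p ^ M' * s := Nat.mul_le_mul_left _ (by omega)
        omega
      · subst h
        have h1 : p ^ M' * i ≤ r + i * p ^ M' := by nlinarith
        rw [if_pos h1, if_pos rfl]
        congr 1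
        have hcomm : p ^ M' * i = i * p ^ M' := Nat.mul_comm _ _
        omega
      · have h1 : ¬ (p ^ M' * i ≤ r + s * p ^ M') := by
          have h3 : p ^ M' * (s + 1) ≤ p ^ M' * i := Nat.mul_le_mul_left _ (by omega)
          have e1 : p ^ M' * (s + 1) = p ^ M' * s + p ^ M' := by ring
          have e2 : s * p ^ M' = p ^ M' * s := by ring
          omega
        rw [if_neg h1, if_neg (by omega)]
    rw [Finset.sum_congr rfl hterm, Finset.sum_ite_eq' (Finset.range p) s (fun _ => Q.coeff r),
      if_pos (Finset.mem_range.mpr hs)]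
  set r := b t₀ % p ^ M' with hr
  set s := b t₀ / p ^ M' with hs
  have hrlt : r < p ^ M' := Nat.mod_lt _ hpM'pos
  have hslt : s < p := by
    have h1 : b t₀ < p ^ M := hb t₀ ht₀
    rw [hMM, pow_succ] at h1
    exact Nat.div_lt_of_lt_mul h1
  have hj₀ : b t₀ = r + s * p ^ M' := by
    rw [hr, hs]
    have := Nat.mod_add_div (b t₀) (p ^ M')
    have hcomm : p ^ M' * (b t₀ / p ^ M') = (b t₀ / p ^ M') * p ^ M' := Nat.mul_comm _ _
    omega
  clear_value r s
  set s' : ℕ := if s = 0 then 1 else 0 with hs'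
  have hs'lt : s' < p := by rw [hs']; split <;> omega
  have hss' : s ≠ s' := by rw [hs']; split <;> omega
  clear_value s'
  have hQr : Q.coeff r ≠ 0 := by
    rw [← hkey r s hrlt hslt, ← hj₀]
    exact hc0 _ (Finset.card_pos.mpr ⟨t₀, Finset.mem_filter.mpr ⟨ht₀, rfl⟩⟩)
  have hcoeff' : P.coeff (r + s' * p ^ M') ≠ 0 := by
    rw [hkey r s' hrlt hs'lt]; exact hQr
  have hfilter : (T.filter (fun t => b t = r + s' * p ^ M')).Nonempty := by
    rw [← Finset.card_pos]
    by_contra h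
    push_neg at h
    have hcard : (T.filter (fun t => b t = r + s' * p ^ M')).card = 0 := by omega
    rw [hcoeff (r + s' * p ^ M'), hcard] at hcoeff'
    simp at hcoeff'
  obtain ⟨t', ht'mem⟩ := hfilter
  rw [Finset.mem_filter] at ht'mem
  refine ⟨t₀, ht₀, t', ht'mem.1, (s:ℤ) - s', ?_, ?_, ?_⟩
  · intro h0
    apply hss'
    omega
  · intro hdvd
    have hd0 : (s:ℤ) - s' ≠ 0 := by
      intro h0; apply hss'; omega
    have hle := Int.le_of_dvd (abs_pos.mpr hd0) ((dvd_abs _ _).mpr hdvd)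
    have habs : |(s:ℤ) - s'| < p := by
      rw [abs_lt]
      constructor <;> omega
    linarith
  · rw [hj₀, ht'mem.2]
    push_cast
    ring

/-! ### The character sum is nonzero at high frequencies -/

lemma gammaT_nonneg (T : Finset ℤ_[p]) (hT : 1 < T.card) : 0 ≤ gammaT p T hT := by
  classical
  unfold gammaT
  have hne : T.offDiag.Nonempty := Finset.card_pos.mp (by
    rw [Finset.offDiag_card]
    have h2 : 2 * T.card ≤ T.card * T.card := Nat.mul_le_mul_right _ hT
    omega)
  obtain ⟨tt, htt⟩ := hne
  have h1 : (0:ℤ) ≤ ((tt.1 - tt.2 : ℤ_[p]) : ℚ_[p]).valuation := PadicInt.valuation_coe_nonneg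
  exact Finset.le_sup'_of_le _ htt h1

lemma valuation_le_gammaT (T : Finset ℤ_[p]) (hT : 1 < T.card) {t t' : ℤ_[p]}
    (ht : t ∈ T) (ht' : t' ∈ T) (hne : t ≠ t') :
    (t - t').valuation ≤ gammaT p T hT := by
  classical
  unfold gammaT
  have hmem : (t, t') ∈ T.offDiag := Finset.mem_offDiag.mpr ⟨ht, ht', hne⟩
  have := Finset.le_sup' (fun tt => ((tt.1 - tt.2 : ℤ_[p]) : ℚ_[p]).valuation) hmem
  rw [← PadicInt.valuation_coe]; exact this

lemma rat_div_int_helper (a b n : ℤ) (k l : ℕ)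
    (h : (a:ℚ)/(p:ℚ)^k + (b:ℚ)/(p:ℚ)^l = n) :
    a * (p:ℤ)^l + b * (p:ℤ)^k = n * (p:ℤ)^(k+l) := by
  have hpq : ((p:ℚ)) ≠ 0 := Nat.cast_ne_zero.mpr hp.out.ne_zero
  have hq : (a:ℚ) * (p:ℚ)^l + (b:ℚ) * (p:ℚ)^k = (n:ℚ) * (p:ℚ)^(k+l) := by
    field_simp at h
    rw [pow_add]
    linear_combination h
  exact_mod_cast hq

lemma charSum_ne_zero (T : Finset ℤ_[p]) (hT : 1 < T.card) (ξ : ℚ_[p])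
    (hξ : (p : ℝ) ^ (gammaT p T hT + 1) < ‖ξ‖) :
    ∑ t ∈ T, psi p (ξ * (t:ℚ_[p])) ≠ 0 := by
  intro hsum0
  set γ := gammaT p T hT with hγ
  have hγ0 : 0 ≤ γ := gammaT_nonneg p T hT
  have hp1 : (1:ℝ) < p := by exact_mod_cast hp.out.one_lt
  have hξ0 : ξ ≠ 0 := by
    intro h
    rw [h, norm_zero] at hξ
    exact absurd hξ (not_lt.mpr (zpow_nonneg (by positivity) _))
  have hv : ‖ξ‖ = (p:ℝ) ^ (-ξ.valuation) := Padic.norm_eq_zpow_neg_valuation hξ0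
  set m : ℤ := -ξ.valuation with hm
  have hγm : γ + 1 < m := by
    rw [hv] at hξ
    exact (zpow_lt_zpow_iff_right₀ hp1).mp hξ
  set M : ℕ := m.toNat with hM
  have hMm : (M:ℤ) = m := Int.toNat_of_nonneg (by omega)
  have hM2 : 2 ≤ M := by omega
  have hM1 : 1 ≤ M := by omega
  have hbound : ∀ t : ℤ_[p], ‖ξ * (t:ℚ_[p])‖ ≤ (p:ℝ)^(M:ℤ) := by
    intro t
    rw [norm_mul]
    calc ‖ξ‖ * ‖(t:ℚ_[p])‖ ≤ ‖ξ‖ * 1 := by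
          apply mul_le_mul_of_nonneg_left t.2 (norm_nonneg _)
      _ = (p:ℝ)^(M:ℤ) := by rw [mul_one, hv, hMm]
  set b : ℤ_[p] → ℕ := fun t => (exists_fract_approx p (ξ * (t:ℚ_[p])) M (hbound t)).choose
    with hb
  have hb1 : ∀ t : ℤ_[p], b t < p ^ M :=
    fun t => (exists_fract_approx p (ξ * (t:ℚ_[p])) M (hbound t)).choose_spec.1
  have hb2 : ∀ t : ℤ_[p], ‖ξ * (t:ℚ_[p]) - ((b t : ℕ):ℚ_[p])/(p:ℚ_[p])^M‖ ≤ 1 :=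
    fun t => (exists_fract_approx p (ξ * (t:ℚ_[p])) M (hbound t)).choose_spec.2
  have hpsib : ∀ t : ℤ_[p], psi p (ξ * (t:ℚ_[p])) = eRat (-(((b t : ℕ):ℚ)/(p:ℚ)^M)) := by
    intro t
    apply psi_eq_of_approx
    push_cast
    exact hb2 t
  set ζ : ℂ := eRat (-(1/(p:ℚ)^M)) with hζdef
  have hζprim : IsPrimitiveRoot ζ (p ^ M) := by
    have h1 : IsPrimitiveRoot (Complex.exp (2 * Real.pi * Complex.I / ((p^M : ℕ):ℂ))) (p^M) :=
      Complex.isPrimitiveRoot_exp _ (pow_ne_zero _ hp.out.ne_zero)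
    have h2 : ζ = (Complex.exp (2 * Real.pi * Complex.I / ((p^M : ℕ):ℂ)))⁻¹ := by
      rw [hζdef, eRat, ← Complex.exp_neg]
      congr 1
      have hpc : ((p:ℂ)) ≠ 0 := by exact_mod_cast (Nat.cast_ne_zero (R := ℂ)).mpr hp.out.ne_zero
      push_cast
      field_simp
    rw [h2]
    exact h1.inv
  have hzeta_pow : ∀ t : ℤ_[p], psi p (ξ * (t:ℚ_[p])) = ζ ^ (b t) := by
    intro t
    rw [hpsib t, hζdef, eRat_pow]
    congr 1
    have hpq : ((p:ℚ)) ≠ 0 := Nat.cast_ne_zero.mpr hp.out.ne_zero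
    field_simp
  have hTne : T.Nonempty := Finset.card_pos.mp (by omega)
  have hsum' : ∑ t ∈ T, ζ ^ (b t) = 0 := by
    rw [← hsum0]
    exact Finset.sum_congr rfl fun t _ => (hzeta_pow t).symm
  obtain ⟨t, ht, t', ht', d, hd0, hdp, hd⟩ :=
    roots_of_unity_lemma p hM1 hζprim b (fun t _ => hb1 t) hTne hsum'
  have hbtne : b t ≠ b t' := by
    intro h
    rw [h] at hd
    simp only [sub_self] at hd
    have : d * (p:ℤ)^(M-1) ≠ 0 :=
      mul_ne_zero hd0 (pow_ne_zero _ (by exact_mod_cast hp.out.ne_zero))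
    exact this hd.symm
  have htne : t ≠ t' := fun h => hbtne (by rw [h])
  set u : ℤ_[p] := t - t' with hu
  have hu0 : u ≠ 0 := sub_ne_zero.mpr htne
  have huq0 : (u:ℚ_[p]) ≠ 0 := PadicInt.coe_ne_zero.mpr hu0
  have hvu0 : 0 ≤ u.valuation := Nat.zero_le _
  have hvuγ : u.valuation ≤ γ := valuation_le_gammaT p T hT ht ht' htne
  set Kn : ℕ := (m - u.valuation).toNat with hKn
  have hKnm : (Kn:ℤ) = m - u.valuation := Int.toNat_of_nonneg (by omega)
  have hKn2 : 2 ≤ Kn := by omega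
  have hppos : (0:ℝ) < p := by positivity
  have hyn : ‖ξ * (u:ℚ_[p])‖ = (p:ℝ)^(Kn:ℤ) := by
    rw [norm_mul, hv, PadicInt.padic_norm_e_of_padicInt, PadicInt.norm_eq_zpow_neg_valuation hu0,
      ← zpow_add₀ (ne_of_gt hppos)]
    congr 1
    omega
  obtain ⟨r, hr1, hr2⟩ := exists_fract_approx p (ξ * (u:ℚ_[p])) Kn (le_of_eq hyn)
  have hpsiu : psi p (ξ * (u:ℚ_[p])) = eRat (-(((r:ℤ):ℚ)/(p:ℚ)^Kn)) :=
    psi_eq_of_approx p _ (r:ℤ) Kn (by push_cast; exact hr2)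
  have hceq : ‖((r:ℕ):ℚ_[p])/(p:ℚ_[p])^Kn‖ = ‖ξ * (u:ℚ_[p])‖ := by
    set a := ξ * (u:ℚ_[p]) with ha
    set c := ((r:ℕ):ℚ_[p])/(p:ℚ_[p])^Kn with hc
    have h1lt : (1:ℝ) < (p:ℝ)^(Kn:ℤ) := one_lt_zpow₀ hp1 (by omega)
    have hclt : ‖a - c‖ < ‖a‖ := lt_of_le_of_lt hr2 (by rw [hyn]; exact h1lt)
    have h1 : ‖c‖ ≤ ‖a‖ := by
      have e : c = a + -(a - c) := by ring
      rw [e]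
      refine le_trans (Padic.nonarchimedean _ _) ?_
      rw [norm_neg]
      exact max_le le_rfl hclt.le
    have h3 : ‖a‖ ≤ max ‖c‖ ‖a - c‖ := by
      conv_lhs => rw [show a = c + (a - c) by ring]
      exact Padic.nonarchimedean _ _
    rcases le_max_iff.mp h3 with h4 | h4
    · exact le_antisymm h1 h4
    · linarith
  have hppane : ((p:ℚ_[p]))^Kn ≠ 0 :=
    pow_ne_zero _ (Nat.cast_ne_zero.mpr hp.out.ne_zero)
  have hnr : ‖((r:ℕ):ℚ_[p])‖ = 1 := by
    have h5 : ‖((r:ℕ):ℚ_[p])‖ = ‖((r:ℕ):ℚ_[p])/(p:ℚ_[p])^Kn‖ * ‖(p:ℚ_[p])^Kn‖ := by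
      rw [← norm_mul, div_mul_cancel₀ _ hppane]
    rw [h5, hceq, hyn, Padic.norm_p_pow, ← zpow_add₀ (ne_of_gt hppos)]
    simp
  have hpr : ¬ (p:ℤ) ∣ (r:ℤ) := by
    intro hdvd
    have hlt := (Padic.norm_intCast_lt_one_iff (p := p) (k := (r:ℤ))).mpr hdvd
    have heq : (((r:ℤ)):ℚ_[p]) = ((r:ℕ):ℚ_[p]) := by push_cast; ring
    rw [heq, hnr] at hlt
    exact lt_irrefl _ hlt
  have hcomb : psi p (ξ * (u:ℚ_[p])) * psi p (ξ * (t':ℚ_[p])) = psi p (ξ * (t:ℚ_[p])) := by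
    rw [← psi_add]
    congr 1
    have hcoe : ((u:ℚ_[p])) = (t:ℚ_[p]) - (t':ℚ_[p]) := by rw [hu]; push_cast; ring
    rw [hcoe]; ring
  rw [hpsiu, hpsib t, hpsib t', ← eRat_add, eRat_eq_iff] at hcomb
  obtain ⟨n, hn⟩ := hcomb
  have hn2 : ((-(r:ℤ)):ℚ)/(p:ℚ)^Kn + ((((b t : ℤ) - (b t' : ℤ))):ℚ)/(p:ℚ)^M = (n:ℚ) := by
    push_cast at hn ⊢
    linear_combination hn
  have hint := rat_div_int_helper p (-(r:ℤ)) ((b t : ℤ) - (b t' : ℤ)) n Kn M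
    (by push_cast; push_cast at hn2; linear_combination hn2)
  rw [hd] at hint
  have hpZne : ((p:ℤ)) ≠ 0 := by exact_mod_cast hp.out.ne_zero
  have hfac : (r:ℤ) * (p:ℤ)^M = (d * (p:ℤ)^(Kn-1) - n * (p:ℤ)^Kn) * (p:ℤ)^M := by
    have e1 : (p:ℤ)^(M-1) * (p:ℤ)^Kn = (p:ℤ)^(Kn-1) * (p:ℤ)^M := by
      rw [← pow_add, ← pow_add]
      congr 1
      omega
    have e2 : (p:ℤ)^(Kn+M) = (p:ℤ)^Kn * (p:ℤ)^M := pow_add _ _ _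
    linear_combination -hint + d * e1 - n * e2
  have hreq : (r:ℤ) = d * (p:ℤ)^(Kn-1) - n * (p:ℤ)^Kn :=
    mul_right_cancel₀ (pow_ne_zero _ hpZne) hfac
  apply hpr
  rw [hreq]
  have d1 : (p:ℤ) ∣ (p:ℤ)^(Kn-1) := dvd_pow_self _ (by omega)
  have d2 : (p:ℤ) ∣ (p:ℤ)^Kn := dvd_pow_self _ (by omega)
  exact dvd_sub (Dvd.dvd.mul_left d1 d) (Dvd.dvd.mul_left d2 n)

/-- If `(Ω, T)` is a tiling pair of `ℤ_p` with `Card T ≥ 2`, then `1̂_Ω(ξ) = 0` for all `ξ`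
with `|ξ|_p > p^{γ_T + 1}`. -/
theorem fourier_indicator_vanishes_high_frequency (Ω : Set ℚ_[p]) (hΩ : Ω ⊆ Zp p)
    (hmeas : MeasurableSet Ω) (hpos : 0 < mHaar p Ω)
    (T : Finset ℤ_[p]) (hT : 1 < T.card)
    (htile : ∀ᵐ x ∂ (mHaar p).restrict (Zp p),
      ∑ t ∈ T, Ω.indicator (fun _ => (1 : ℝ)) (x - (t : ℚ_[p])) = 1)
    (ξ : ℚ_[p]) (hξ : (p : ℝ) ^ (gammaT p T hT + 1) < ‖ξ‖) :
    (∫ x in Ω, Complex.exp (-(2 * Real.pi * Complex.I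
        * (padicFract p (ξ * x) : ℂ))) ∂ mHaar p) = 0 := by
  have hγ0 : 0 ≤ gammaT p T hT := gammaT_nonneg p T hT
  have hp1 : (1:ℝ) < p := by exact_mod_cast hp.out.one_lt
  have h1ξ : 1 < ‖ξ‖ := by
    refine lt_of_lt_of_le ?_ hξ.le
    calc (1:ℝ) = (p:ℝ) ^ (0:ℤ) := (zpow_zero _).symm
      _ < (p:ℝ) ^ (gammaT p T hT + 1) := by
          apply zpow_lt_zpow_right₀ hp1
          omega
  have hS := charSum_ne_zero p T hT ξ hξ
  have hprod := tiling_fourier p Ω hΩ hmeas T htile ξ h1ξ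
  have hI : (∫ x in Ω, psi p (ξ * x) ∂ mHaar p) = 0 := by
    rcases mul_eq_zero.mp hprod with h | h
    · exact absurd h hS
    · exact h
  exact hI

end PadicTiling
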